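/- Let D ≥ 1 and λ : Fin D → ℝ with λ_j > 0 for all j. Let μ be the probability measure on ℂ^D under which the coordinates z_j are independent, with real and imaginary parts of z_j independent centered real Gaussians of variance λ_j/2 (so that the expectation of |z_j|² is λ_j and of z_j² is 0). Then for every k ≥ 1 and all tuples m, m' : Fin k → Fin D, ∫ ∏_{j=1}^k z_{m_j} · conj(z_{m'_j}) dμ(z) = ∑_{σ ∈ S_k} ∏_{j=1}^k (λ_{m_j} if m'_{σ(j)} = m_j, else 0). Equivalently, the k-th moment ∫ (z z^†)^{⊗k} dμ(z) equals ρ^{⊗k} ∑_{σ ∈ S_k} Perm(σ), where ρ = diag(λ) and Perm(σ) is the permutation operator on (ℂ^D)^{⊗k}. -/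

import Mathlib

open MeasureTheory

/-- The circular complex Gaussian measure on `ℂ` with `E|z|² = v`: real and imaginary
parts are independent centered real Gaussians of variance `v/2`. -/
noncomputable def complexGaussian (v : ℝ) : Measure ℂ :=
  ((ProbabilityTheory.gaussianReal 0 (Real.toNNReal (v / 2))).prod
    (ProbabilityTheory.gaussianReal 0 (Real.toNNReal (v / 2)))).map
    (fun p : ℝ × ℝ => (p.1 : ℂ) + (p.2 : ℂ) * Complex.I)

instance (v : ℝ) : IsProbabilityMeasure (complexGaussian v) := by
  unfold complexGaussian
  exact Measure.isProbabilityMeasure_map (Measurable.aemeasurable (by fun_prop))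

section Aux

open ProbabilityTheory Real Set
open scoped ENNReal

/- ### Combinatorial auxiliary lemmas -/

lemma card_equiv_ite (α β : Type*) [Fintype α] [Fintype β] [DecidableEq α] [DecidableEq β] :
    Fintype.card (α ≃ β) =
      if Fintype.card α = Fintype.card β then (Fintype.card α).factorial else 0 := by
  by_cases h : Fintype.card α = Fintype.card β
  · rw [if_pos h, Fintype.card_equiv (Fintype.equivOfCardEq h)]
  · rw [if_neg h]
    rw [Fintype.card_eq_zero_iff]
    exact ⟨fun e => h (Fintype.card_congr e)⟩

def permFiberEquiv {k : ℕ} {D : ℕ} (m m' : Fin k → Fin D) :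
    {σ : Equiv.Perm (Fin k) // ∀ j, m' (σ j) = m j} ≃
      ∀ i : Fin D, ({j // m j = i} ≃ {j // m' j = i}) where
  toFun := fun ⟨σ, hσ⟩ i =>
    { toFun := fun ⟨j, hj⟩ => ⟨σ j, (hσ j).trans hj⟩
      invFun := fun ⟨j, hj⟩ => ⟨σ.symm j, by
        have := hσ (σ.symm j); rw [Equiv.apply_symm_apply] at this; rw [← this, hj]⟩
      left_inv := fun ⟨j, hj⟩ => by simp
      right_inv := fun ⟨j, hj⟩ => by simp }
  invFun := fun e => ⟨Equiv.ofFiberEquiv e, fun j => Equiv.ofFiberEquiv_map e j⟩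
  left_inv := fun ⟨σ, hσ⟩ => by
    ext j
    simp [Equiv.ofFiberEquiv, Equiv.sigmaFiberEquiv]
  right_inv := fun e => by
    funext i
    ext ⟨j, hj⟩
    subst hj
    simp [Equiv.ofFiberEquiv, Equiv.sigmaFiberEquiv]

lemma card_perm_comp {k D : ℕ} (m m' : Fin k → Fin D) :
    (Finset.univ.filter (fun σ : Equiv.Perm (Fin k) => ∀ j, m' (σ j) = m j)).card
      = ∏ i : Fin D,
        (if (Finset.univ.filter (fun j => m j = i)).card
            = (Finset.univ.filter (fun j => m' j = i)).card
          then ((Finset.univ.filter (fun j => m j = i)).card).factorial else 0) := by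
  classical
  rw [← Fintype.card_subtype]
  rw [Fintype.card_congr (permFiberEquiv m m')]
  rw [Fintype.card_pi]
  refine Finset.prod_congr rfl fun i _ => ?_
  rw [card_equiv_ite]
  simp [Fintype.card_subtype]

lemma prod_pow_card {M : Type*} [CommMonoid M] {k D : ℕ} (m : Fin k → Fin D) (f : Fin D → M) :
    ∏ j, f (m j) = ∏ i, f i ^ (Finset.univ.filter (fun j => m j = i)).card := by
  classical
  rw [← Finset.prod_fiberwise_of_maps_to (fun j _ => Finset.mem_univ (m j)) (fun j => f (m j))]
  refine Finset.prod_congr rfl fun i _ => ?_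
  rw [Finset.prod_congr rfl (fun j hj => by rw [(Finset.mem_filter.mp hj).2] :
      ∀ j ∈ _, f (m j) = f i),
    Finset.prod_const]

/- ### The density of the complex Gaussian, and its moments -/

lemma withDensity_prod_density {α β : Type*} [MeasurableSpace α] [MeasurableSpace β]
    (μ : Measure α) (ν : Measure β) [SigmaFinite μ] [SigmaFinite ν]
    {f : α → ℝ≥0∞} {g : β → ℝ≥0∞} (hf : Measurable f) (hg : Measurable g)
    [SigmaFinite (μ.withDensity f)] [SigmaFinite (ν.withDensity g)] :
    (μ.withDensity f).prod (ν.withDensity g)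
      = (μ.prod ν).withDensity (fun p => f p.1 * g p.2) := by
  refine Measure.prod_eq (μ := μ.withDensity f) (ν := ν.withDensity g)
    (μν := (μ.prod ν).withDensity fun p => f p.1 * g p.2) fun s t hs ht => ?_
  rw [withDensity_apply _ (hs.prod ht), ← Measure.prod_restrict,
    lintegral_prod_mul hf.aemeasurable hg.aemeasurable,
    withDensity_apply _ hs, withDensity_apply _ ht]

lemma complexGaussian_integral (v : ℝ) (hv : 0 < v) (F : ℂ → ℂ) (hF : Continuous F) :
    ∫ z, F z ∂(complexGaussian v)
      = ∫ z : ℂ, ((π * v)⁻¹ * Real.exp (-(Complex.normSq z) / v)) • F z := by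
  have hs : (Real.toNNReal (v/2)) ≠ 0 := by
    simp only [ne_eq, Real.toNNReal_eq_zero, not_le]; linarith
  set s := Real.toNNReal (v/2) with hs_def
  have hsv : (s : ℝ) = v / 2 := Real.coe_toNNReal _ (by linarith)
  haveI : SigmaFinite (volume.withDensity (gaussianPDF 0 s)) := by
    rw [← gaussianReal_of_var_ne_zero 0 hs]; infer_instance
  have key : ∀ x y : ℝ, gaussianPDFReal 0 s x * gaussianPDFReal 0 s y
      = (π * v)⁻¹ * Real.exp (-(x^2 + y^2)/v) := by
    intro x y
    rw [gaussianPDFReal, gaussianPDFReal, hsv]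
    have h2 : 2 * π * (v/2) = π * v := by ring
    rw [h2]
    have hpv : (0:ℝ) ≤ π * v := by positivity
    rw [show (√(π*v))⁻¹ * rexp (-(x-0)^2/(2*(v/2))) * ((√(π*v))⁻¹ * rexp (-(y-0)^2/(2*(v/2))))
        = ((√(π*v)) * (√(π*v)))⁻¹ * (rexp (-(x-0)^2/(2*(v/2))) * rexp (-(y-0)^2/(2*(v/2)))) by
      rw [mul_inv]; ring]
    rw [Real.mul_self_sqrt hpv, ← Real.exp_add]
    congr 1
    have : 2 * (v/2) = v := by ring
    rw [this]
    ring
  have hdens : (fun p : ℝ × ℝ => gaussianPDF 0 s p.1 * gaussianPDF 0 s p.2)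
      = fun p => (((π * v)⁻¹ * Real.exp (-(p.1^2 + p.2^2)/v)).toNNReal : ℝ≥0∞) := by
    funext p
    rw [gaussianPDF, gaussianPDF, ← ENNReal.ofReal_mul (gaussianPDFReal_nonneg _ _ _), key]
    rfl
  rw [complexGaussian, integral_map (by fun_prop) hF.aestronglyMeasurable]
  rw [gaussianReal_of_var_ne_zero 0 hs,
    withDensity_prod_density volume volume (measurable_gaussianPDF 0 s)
      (measurable_gaussianPDF 0 s),
    hdens, integral_withDensity_eq_integral_smul (by fun_prop)]
  rw [← Measure.volume_eq_prod]
  rw [← (Complex.volume_preserving_equiv_real_prod.symm).integral_comp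
    Complex.measurableEquivRealProd.symm.measurableEmbedding
    (fun z => ((π*v)⁻¹ * Real.exp (-(Complex.normSq z)/v)) • F z)]
  congr 1
  funext p
  have he : Complex.measurableEquivRealProd.symm p = (p.1 : ℂ) + (p.2 : ℂ) * Complex.I := by
    simp [Complex.measurableEquivRealProd, Complex.equivRealProdCLM_symm_apply]
  rw [he, Complex.normSq_add_mul_I]
  rw [NNReal.smul_def, Real.coe_toNNReal _ (by positivity)]

lemma complexGaussian_moment (v : ℝ) (hv : 0 < v) (a b : ℕ) :
    ∫ z, z ^ a * (starRingEnd ℂ) z ^ b ∂(complexGaussian v)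
      = if a = b then (a.factorial : ℂ) * (v : ℂ) ^ a else 0 := by
  have hπ := Real.pi_pos
  rw [complexGaussian_integral v hv (fun z => z ^ a * (starRingEnd ℂ) z ^ b) ((continuous_pow a).mul (Complex.continuous_conj.pow b))]
  rw [← Complex.integral_comp_polarCoord_symm]
  have hpt : ∀ p : ℝ × ℝ,
      p.1 • (((π * v)⁻¹ * Real.exp (-(Complex.normSq (Complex.polarCoord.symm p)) / v)) •
          ((Complex.polarCoord.symm p) ^ a * (starRingEnd ℂ) (Complex.polarCoord.symm p) ^ b))
        = (((π * v)⁻¹ * Real.exp (-(p.1 ^ 2) / v) * p.1 ^ (a + b + 1) : ℝ) : ℂ)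
            * Complex.exp ((((a : ℂ) - b)) * p.2 * Complex.I) := by
    rintro ⟨r, θ⟩
    simp only [Complex.polarCoord_symm_apply]
    have hw : ((Real.cos θ : ℂ) + (Real.sin θ : ℂ) * Complex.I) = Complex.exp (θ * Complex.I) := by
      rw [Complex.exp_mul_I, Complex.ofReal_cos, Complex.ofReal_sin]
    rw [hw]
    have hns : Complex.normSq ((r : ℂ) * Complex.exp (θ * Complex.I)) = r ^ 2 := by
      rw [Complex.normSq_mul, Complex.normSq_eq_norm_sq, Complex.normSq_eq_norm_sq,
        Complex.norm_exp_ofReal_mul_I, Complex.norm_real]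
      simp [sq_abs]
    rw [hns]
    have hconj : (starRingEnd ℂ) ((r : ℂ) * Complex.exp (θ * Complex.I))
        = (r : ℂ) * Complex.exp (-(θ * Complex.I)) := by
      rw [map_mul, Complex.conj_ofReal, ← Complex.exp_conj, map_mul, Complex.conj_ofReal,
        Complex.conj_I, mul_neg]
    rw [hconj, mul_pow, mul_pow, ← Complex.exp_nat_mul, ← Complex.exp_nat_mul]
    rw [Complex.real_smul, Complex.real_smul]
    push_cast
    have hXY : Complex.exp ((a : ℂ) * ((θ : ℂ) * Complex.I)) *
        Complex.exp ((b : ℂ) * -((θ : ℂ) * Complex.I))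
        = Complex.exp (((a : ℂ) - b) * (θ : ℂ) * Complex.I) := by
      rw [← Complex.exp_add]; ring_nf
    rw [← hXY]
    ring
  rw [setIntegral_congr_fun polarCoord.open_target.measurableSet (fun p _ => hpt p)]
  rw [polarCoord_target, Measure.volume_eq_prod,
    setIntegral_prod_mul (fun r : ℝ => (((π * v)⁻¹ * Real.exp (-(r^2)/v) * r^(a+b+1) : ℝ) : ℂ))
      (fun θ : ℝ => Complex.exp (((a:ℂ) - b) * θ * Complex.I)) (Ioi 0) (Ioo (-π) π)]
  by_cases hab : a = b
  · subst hab
    rw [if_pos rfl]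
    have hθ : (∫ θ in Ioo (-π) π, Complex.exp (((a:ℂ) - a) * θ * Complex.I))
        = ((2 * π : ℝ) : ℂ) := by
      simp only [sub_self, zero_mul, Complex.exp_zero]
      rw [setIntegral_const, Real.volume_real_Ioo_of_le (by linarith)]
      rw [show π - -π = 2 * π by ring]
      simp
    have hreal : (∫ r in Ioi (0:ℝ), (π * v)⁻¹ * Real.exp (-(r^2)/v) * r^(a+a+1))
        = (π*v)⁻¹ * ((v:ℝ)^(a+1) * (1/2) * (a.factorial : ℝ)) := by
      rw [setIntegral_congr_fun measurableSet_Ioi (g := fun r =>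
          (π*v)⁻¹ * (r ^ (((2*a+1:ℕ)):ℝ) * Real.exp (-(1/v) * r ^ (2:ℝ))))
          (fun r hr => by
            simp only [Real.rpow_natCast, Real.rpow_two]
            rw [show -(1/v) * r^2 = -(r^2)/v by ring, show 2*a+1 = a+a+1 by ring]
            ring)]
      rw [integral_const_mul, integral_rpow_mul_exp_neg_mul_rpow (by norm_num)
        (by have : (0:ℝ) ≤ (a:ℝ) := Nat.cast_nonneg a
            push_cast
            linarith : (-1:ℝ) < ((2*a+1:ℕ):ℝ))
        (by positivity : (0:ℝ) < 1/v)]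
      congr 1
      have he : -(((2*a+1:ℕ):ℝ) + 1) / 2 = -((a:ℝ)+1) := by push_cast; ring
      have he2 : (((2*a+1:ℕ):ℝ) + 1) / 2 = (a:ℝ)+1 := by push_cast; ring
      rw [he, he2, Real.Gamma_nat_eq_factorial]
      rw [one_div, Real.inv_rpow hv.le, Real.rpow_neg hv.le, inv_inv]
      rw [show ((a:ℝ)+1) = ((a+1 : ℕ):ℝ) by push_cast; ring, Real.rpow_natCast]
    have hr : (∫ r in Ioi (0:ℝ), (((π * v)⁻¹ * Real.exp (-(r^2)/v) * r^(a+a+1) : ℝ) : ℂ))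
        = (((π*v)⁻¹ * ((v:ℝ)^(a+1) * (1/2) * (a.factorial : ℝ)) : ℝ) : ℂ) := by
      rw [show (∫ r in Ioi (0:ℝ), (((π * v)⁻¹ * Real.exp (-(r^2)/v) * r^(a+a+1) : ℝ) : ℂ))
          = (((∫ r in Ioi (0:ℝ), (π * v)⁻¹ * Real.exp (-(r^2)/v) * r^(a+a+1)) : ℝ) : ℂ)
        from integral_ofReal, hreal]
    rw [hθ, hr]
    have hπ' : (π : ℝ) ≠ 0 := ne_of_gt hπ
    have hv' : (v : ℝ) ≠ 0 := ne_of_gt hv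
    have : ((π*v)⁻¹ * ((v:ℝ)^(a+1) * (1/2) * (a.factorial : ℝ))) * (2*π)
        = (a.factorial : ℝ) * v^a := by
      rw [pow_succ]
      field_simp
    rw [← Complex.ofReal_mul, this]
    push_cast
    ring
  · rw [if_neg hab]
    have hne : ((a:ℂ) - b) * Complex.I ≠ 0 := by
      refine mul_ne_zero (sub_ne_zero.mpr ?_) Complex.I_ne_zero
      exact_mod_cast hab
    have hθ : (∫ θ in Ioo (-π) π, Complex.exp (((a:ℂ) - b) * θ * Complex.I)) = 0 := by
      rw [← integral_Ioc_eq_integral_Ioo,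
        ← intervalIntegral.integral_of_le (by linarith : -π ≤ π)]
      simp_rw [show ∀ θ:ℝ, ((a:ℂ)-b) * θ * Complex.I = (((a:ℂ)-b) * Complex.I) * θ
        from fun θ => by ring]
      rw [integral_exp_mul_complex hne]
      have h1 : ((a:ℂ)-b) * Complex.I * (π:ℂ)
          = ((((a:ℤ) - b):ℤ):ℂ) * ((π:ℂ) * Complex.I) := by
        push_cast; ring
      have h2 : ((a:ℂ)-b) * Complex.I * ((-π:ℝ):ℂ)
          = (((-((a:ℤ) - b)):ℤ):ℂ) * ((π:ℂ) * Complex.I) := by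
        push_cast; ring
      rw [h1, h2, Complex.exp_int_mul, Complex.exp_int_mul, Complex.exp_pi_mul_I]
      have hsq : ((-1:ℂ)^((a:ℤ)-b)) * ((-1:ℂ)^((a:ℤ)-b)) = 1 := by
        rw [← zpow_add₀ (by norm_num : (-1:ℂ) ≠ 0), ← two_mul, zpow_mul]
        norm_num
      rw [zpow_neg, inv_eq_of_mul_eq_one_right hsq, sub_self, zero_div]
    rw [hθ, mul_zero]

/- ### Factorization of integrals over `Measure.pi` -/

lemma integral_pi_prod {D : ℕ} (μ : Fin D → Measure ℂ) [∀ i, IsProbabilityMeasure (μ i)]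
    (f : Fin D → ℂ → ℂ) :
    ∫ z : Fin D → ℂ, ∏ i, f i (z i) ∂(Measure.pi μ) = ∏ i, ∫ w, f i w ∂(μ i) :=
  MeasureTheory.integral_fintype_prod_eq_prod (μ := μ) f

end Aux

/-- `k`-th moments of the unnormalized Scrooge (Gaussian) ensemble with first moment
`ρ = diag(λ)`: for independent circular complex Gaussian coordinates with `E|zⱼ|² = λⱼ`,
`∫ ∏ⱼ z_{mⱼ} conj(z_{m'ⱼ}) dμ = ∑_{σ ∈ S_k} ∏ⱼ λ_{mⱼ} [m'_{σ(j)} = mⱼ]`. -/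
theorem unnormalized_scrooge_kth_moment
    (D : ℕ) (hD : 1 ≤ D) (lam : Fin D → ℝ) (hlam : ∀ j, 0 < lam j)
    (k : ℕ) (hk : 1 ≤ k) (m m' : Fin k → Fin D) :
    (∫ z : Fin D → ℂ, ∏ j, z (m j) * (starRingEnd ℂ) (z (m' j))
        ∂(Measure.pi fun j => complexGaussian (lam j))) =
      ∑ σ : Equiv.Perm (Fin k),
        ∏ j, (if m' (σ j) = m j then (lam (m j) : ℂ) else 0) := by
  classical
  set a : Fin D → ℕ := fun i => (Finset.univ.filter (fun j => m j = i)).card with ha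
  set b : Fin D → ℕ := fun i => (Finset.univ.filter (fun j => m' j = i)).card with hb
  -- LHS
  have hint : ∀ z : Fin D → ℂ,
      ∏ j, z (m j) * (starRingEnd ℂ) (z (m' j))
        = ∏ i, ((z i) ^ (a i) * ((starRingEnd ℂ) (z i)) ^ (b i)) := by
    intro z
    rw [Finset.prod_mul_distrib, prod_pow_card m (fun i => z i),
      prod_pow_card m' (fun i => (starRingEnd ℂ) (z i)), ← Finset.prod_mul_distrib]
  have hLHS : (∫ z : Fin D → ℂ, ∏ j, z (m j) * (starRingEnd ℂ) (z (m' j))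
        ∂(Measure.pi fun j => complexGaussian (lam j)))
      = ∏ i, (if a i = b i then ((a i).factorial : ℂ) * (lam i : ℂ) ^ (a i) else 0) := by
    simp_rw [hint]
    rw [integral_pi_prod (fun i => complexGaussian (lam i))
      (fun i w => w ^ (a i) * ((starRingEnd ℂ) w) ^ (b i))]
    exact Finset.prod_congr rfl fun i _ =>
      complexGaussian_moment (lam i) (hlam i) (a i) (b i)
  rw [hLHS]
  -- RHS
  have hRHS : (∑ σ : Equiv.Perm (Fin k),
        ∏ j, (if m' (σ j) = m j then (lam (m j) : ℂ) else 0))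
      = ((Finset.univ.filter (fun σ : Equiv.Perm (Fin k) => ∀ j, m' (σ j) = m j)).card : ℕ)
          • ∏ j, (lam (m j) : ℂ) := by
    have : ∀ σ : Equiv.Perm (Fin k),
        (∏ j, (if m' (σ j) = m j then (lam (m j) : ℂ) else 0))
          = if (∀ j, m' (σ j) = m j) then ∏ j, (lam (m j) : ℂ) else 0 :=
      fun σ => by rw [Fintype.prod_ite_zero]; congr
    simp_rw [this]
    rw [← Finset.sum_filter, Finset.sum_const]
  rw [hRHS, card_perm_comp m m', prod_pow_card m (fun i => (lam i : ℂ))]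
  rw [nsmul_eq_mul, Nat.cast_prod, ← Finset.prod_mul_distrib]
  refine (Finset.prod_congr rfl fun i _ => ?_).symm
  rw [Nat.cast_ite]
  split_ifs with h
  · norm_num
    rfl
  · push_cast
    rw [zero_mul]
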